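/- For any two stochastic policies π and π̃ on a discounted MDP, the expected discounted return of π̃ equals the return of π plus the expected discounted sum of advantages of π along trajectories generated by π̃: η(π̃) = η(π) + E_{τ∼π̃}[Σ_{t=0}^∞ γ^t A_π(s_t, a_t)]. -/

import Mathlib

open Finset

/-- State distribution at time `t` when executing policy `π` in the MDP with
transition kernel `P`, starting from initial state distribution `ρ₀`. -/
noncomputable def stateDist {S A : Type} [Fintype S] [Fintype A]
    (P : S → A → S → ℝ) (π : S → A → ℝ) (ρ₀ : S → ℝ) : ℕ → S → ℝ
  | 0 => ρ₀
  | (t+1) => fun s' => ∑ s, ∑ a, stateDist P π ρ₀ t s * π s a * P s a s'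

section lemmas
variable {S A : Type} [Fintype S] [Fintype A]
  (P : S → A → S → ℝ) (π : S → A → ℝ) (ρ₀ : S → ℝ)

lemma stateDist_nonneg (hP : ∀ s a s', 0 ≤ P s a s') (hπ : ∀ s a, 0 ≤ π s a)
    (hρ : ∀ s, 0 ≤ ρ₀ s) : ∀ t s, 0 ≤ stateDist P π ρ₀ t s := by
  intro t
  induction t with
  | zero => exact hρ
  | succ t ih =>
    intro s'
    apply Finset.sum_nonneg; intro s _
    apply Finset.sum_nonneg; intro a _
    exact mul_nonneg (mul_nonneg (ih s) (hπ s a)) (hP s a s')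

lemma stateDist_sum (hPsum : ∀ s a, ∑ s', P s a s' = 1)
    (hπsum : ∀ s, ∑ a, π s a = 1) (hρsum : ∑ s, ρ₀ s = 1) :
    ∀ t, ∑ s, stateDist P π ρ₀ t s = 1 := by
  intro t
  induction t with
  | zero => exact hρsum
  | succ t ih =>
    show ∑ s', ∑ s, ∑ a, stateDist P π ρ₀ t s * π s a * P s a s' = 1
    rw [Finset.sum_comm]
    calc ∑ s, ∑ s', ∑ a, stateDist P π ρ₀ t s * π s a * P s a s'
        = ∑ s, stateDist P π ρ₀ t s := by
          apply Finset.sum_congr rfl; intro s _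
          rw [Finset.sum_comm]
          calc ∑ a, ∑ s', stateDist P π ρ₀ t s * π s a * P s a s'
              = ∑ a, stateDist P π ρ₀ t s * π s a := by
                apply Finset.sum_congr rfl; intro a _
                rw [← Finset.mul_sum, hPsum, mul_one]
            _ = stateDist P π ρ₀ t s := by rw [← Finset.mul_sum, hπsum, mul_one]
      _ = 1 := ih

lemma stateDist_step (h : S → ℝ) (t : ℕ) :
    ∑ s, stateDist P π ρ₀ t s * ∑ a, π s a * ∑ s', P s a s' * h s'
      = ∑ s', stateDist P π ρ₀ (t+1) s' * h s' := by
  show _ = ∑ s', (∑ s, ∑ a, stateDist P π ρ₀ t s * π s a * P s a s') * h s'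
  simp only [Finset.mul_sum, Finset.sum_mul]
  conv_rhs => rw [Finset.sum_comm]
  apply Finset.sum_congr rfl; intro s _
  conv_rhs => rw [Finset.sum_comm]
  apply Finset.sum_congr rfl; intro a _
  apply Finset.sum_congr rfl; intro s' _
  ring

end lemmas

lemma tele_hasSum (γ : ℝ) (hγ0 : 0 ≤ γ) (hγ1 : γ < 1) (g : ℕ → ℝ) (C : ℝ)
    (hb : ∀ t, |g t| ≤ C) :
    HasSum (fun t => γ ^ t * g t - γ ^ (t+1) * g (t+1)) (g 0) := by
  have hgeo : Summable (fun t : ℕ => γ ^ t * C) :=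
    (summable_geometric_of_lt_one hγ0 hγ1).mul_right C
  have hgeo' : Summable (fun t : ℕ => γ ^ (t+1) * C) := by
    have := hgeo.comp_injective (add_left_injective 1)
    exact this
  have hle : ∀ t, ‖γ ^ t * g t - γ ^ (t+1) * g (t+1)‖ ≤ γ ^ t * C + γ ^ (t+1) * C := by
    intro t
    calc ‖γ ^ t * g t - γ ^ (t+1) * g (t+1)‖
        ≤ ‖γ ^ t * g t‖ + ‖γ ^ (t+1) * g (t+1)‖ := norm_sub_le _ _
      _ ≤ γ ^ t * C + γ ^ (t+1) * C := by
          simp only [norm_mul, Real.norm_eq_abs, abs_of_nonneg (pow_nonneg hγ0 t),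
            abs_of_nonneg (pow_nonneg hγ0 (t+1))]
          gcongr
          · exact hb t
          · exact hb (t+1)
  have hsumm : Summable (fun t => ‖γ ^ t * g t - γ ^ (t+1) * g (t+1)‖) :=
    Summable.of_nonneg_of_le (fun t => norm_nonneg _) hle (hgeo.add hgeo')
  rw [hasSum_iff_tendsto_nat_of_summable_norm hsumm]
  have hps : ∀ n, ∑ t ∈ range n, (γ ^ t * g t - γ ^ (t+1) * g (t+1))
      = γ ^ 0 * g 0 - γ ^ n * g n := fun n => Finset.sum_range_sub' (fun t => γ ^ t * g t) n
  simp only [hps, pow_zero, one_mul]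
  have h0 : Filter.Tendsto (fun n : ℕ => γ ^ n * g n) Filter.atTop (nhds 0) := by
    apply squeeze_zero_norm (fun n => ?_)
      (by simpa using (tendsto_pow_atTop_nhds_zero_of_lt_one hγ0 hγ1).mul_const C)
    rw [norm_mul, Real.norm_eq_abs, Real.norm_eq_abs, abs_of_nonneg (pow_nonneg hγ0 n)]
    exact mul_le_mul_of_nonneg_left (hb n) (pow_nonneg hγ0 _)
  simpa using (tendsto_const_nhds.sub h0)

/-- η(π̃) = η(π) + E_{τ∼π̃}[ Σ_t γ^t A_π(s_t,a_t) ]. -/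
theorem stmt_0 {S A : Type} [Fintype S] [Fintype A]
    (P : S → A → S → ℝ) (r : S → ℝ) (ρ₀ : S → ℝ) (γ : ℝ)
    (π πt : S → A → ℝ) (V Vt : S → ℝ) (Q Aπ : S → A → ℝ)
    (hγ0 : 0 ≤ γ) (hγ1 : γ < 1)
    (hPpos : ∀ s a s', 0 ≤ P s a s') (hPsum : ∀ s a, ∑ s', P s a s' = 1)
    (hρpos : ∀ s, 0 ≤ ρ₀ s) (hρsum : ∑ s, ρ₀ s = 1)
    (hπpos : ∀ s a, 0 ≤ π s a) (hπsum : ∀ s, ∑ a, π s a = 1)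
    (hπtpos : ∀ s a, 0 ≤ πt s a) (hπtsum : ∀ s, ∑ a, πt s a = 1)
    (hV : ∀ s, V s = ∑ a, π s a * (r s + γ * ∑ s', P s a s' * V s'))
    (hVt : ∀ s, Vt s = ∑ a, πt s a * (r s + γ * ∑ s', P s a s' * Vt s'))
    (hQ : ∀ s a, Q s a = r s + γ * ∑ s', P s a s' * V s')
    (hA : ∀ s a, Aπ s a = Q s a - V s) :
    ∑ s, ρ₀ s * Vt s =
      (∑ s, ρ₀ s * V s) +
        ∑' t : ℕ, γ ^ t * ∑ s, stateDist P πt ρ₀ t s * ∑ a, πt s a * Aπ s a := by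
  set d := stateDist P πt ρ₀ with hd
  have hd0 : ∀ t s, 0 ≤ d t s := stateDist_nonneg P πt ρ₀ hPpos hπtpos hρpos
  have hd1 : ∀ t, ∑ s, d t s = 1 := stateDist_sum P πt ρ₀ hPsum hπtsum hρsum
  have hdle : ∀ t s, d t s ≤ 1 := by
    intro t s
    calc d t s ≤ ∑ s', d t s' :=
          Finset.single_le_sum (fun s' _ => hd0 t s') (Finset.mem_univ s)
      _ = 1 := hd1 t
  -- generic bound
  have hbound : ∀ (h : S → ℝ) t, |∑ s, d t s * h s| ≤ ∑ s, |h s| := by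
    intro h t
    calc |∑ s, d t s * h s| ≤ ∑ s, |d t s * h s| := Finset.abs_sum_le_sum_abs _ _
      _ ≤ ∑ s, |h s| := by
          apply Finset.sum_le_sum; intro s _
          rw [abs_mul, abs_of_nonneg (hd0 t s)]
          calc d t s * |h s| ≤ 1 * |h s| :=
                mul_le_mul_of_nonneg_right (hdle t s) (abs_nonneg _)
            _ = |h s| := one_mul _
  set f : ℕ → ℝ := fun t => ∑ s, d t s * V s with hf
  set g : ℕ → ℝ := fun t => ∑ s, d t s * Vt s with hg
  set R : ℕ → ℝ := fun t => ∑ s, d t s * r s with hR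
  -- Bellman for Vt rearranged
  have hVt' : ∀ s, Vt s = r s + γ * ∑ a, πt s a * ∑ s', P s a s' * Vt s' := by
    intro s
    rw [hVt s]
    simp only [mul_add, Finset.sum_add_distrib, ← Finset.sum_mul, hπtsum s, one_mul,
      Finset.mul_sum]
    congr 1
    apply Finset.sum_congr rfl; intro a _
    apply Finset.sum_congr rfl; intro s' _; ring
  -- recursion for g
  have hgrec : ∀ t, g t = R t + γ * g (t+1) := by
    intro t
    have : g t = ∑ s, d t s * (r s + γ * ∑ a, πt s a * ∑ s', P s a s' * Vt s') := by
      apply Finset.sum_congr rfl; intro s _; rw [← hVt' s]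
    rw [this]
    simp only [mul_add, Finset.sum_add_distrib]
    congr 1
    calc ∑ x, d t x * (γ * ∑ a, πt x a * ∑ s', P x a s' * Vt s')
        = γ * ∑ x, d t x * ∑ a, πt x a * ∑ s', P x a s' * Vt s' := by
          rw [Finset.mul_sum]
          apply Finset.sum_congr rfl; intro x _; ring
      _ = γ * g (t+1) := by rw [hd, stateDist_step P πt ρ₀ Vt t]
  -- inner advantage sum
  have hinner : ∀ t, (∑ s, d t s * ∑ a, πt s a * Aπ s a) = R t - f t + γ * f (t+1) := by
    intro t
    have h1 : ∀ s, (∑ a, πt s a * Aπ s a)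
        = r s - V s + γ * ∑ a, πt s a * ∑ s', P s a s' * V s' := by
      intro s
      have : ∀ a, πt s a * Aπ s a
          = πt s a * (r s - V s) + γ * (πt s a * ∑ s', P s a s' * V s') := by
        intro a; rw [hA s a, hQ s a]; ring
      simp only [this, Finset.sum_add_distrib, ← Finset.sum_mul, ← Finset.mul_sum,
        hπtsum s, one_mul]
    calc (∑ s, d t s * ∑ a, πt s a * Aπ s a)
        = ∑ s, (d t s * (r s - V s) + γ * (d t s * ∑ a, πt s a * ∑ s', P s a s' * V s')) := by
          apply Finset.sum_congr rfl; intro s _; rw [h1 s]; ring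
      _ = (∑ s, d t s * (r s - V s))
            + γ * ∑ s, d t s * ∑ a, πt s a * ∑ s', P s a s' * V s' := by
          rw [Finset.sum_add_distrib, ← Finset.mul_sum]
      _ = R t - f t + γ * f (t+1) := by
          rw [stateDist_step P πt ρ₀ V t]
          congr 1
          simp only [hR, hf, mul_sub, Finset.sum_sub_distrib]
  -- HasSums
  have hs1 : HasSum (fun t => γ ^ t * R t) (g 0) := by
    have := tele_hasSum γ hγ0 hγ1 g (∑ s, |Vt s|) (fun t => hbound Vt t)
    convert this using 2 with t
    rw [hgrec t]; ring
  have hs2 : HasSum (fun t => γ ^ t * (γ * f (t+1) - f t)) (-(f 0)) := by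
    have := (tele_hasSum γ hγ0 hγ1 f (∑ s, |V s|) (fun t => hbound V t)).neg
    convert this using 2 with t
    · rfl
    ring
  have hs3 : HasSum (fun t => γ ^ t * ∑ s, d t s * ∑ a, πt s a * Aπ s a) (g 0 - f 0) := by
    have h := hs1.add hs2
    have heq : (fun t => γ ^ t * ∑ s, d t s * ∑ a, πt s a * Aπ s a)
        = fun t => γ ^ t * R t + γ ^ t * (γ * f (t+1) - f t) := by
      funext t; rw [hinner t]; ring
    rw [heq, show g 0 - f 0 = g 0 + -f 0 by ring]
    exact h
  rw [hs3.tsum_eq]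
  have hg0 : g 0 = ∑ s, ρ₀ s * Vt s := by simp [hg, hd, stateDist]
  have hf0 : f 0 = ∑ s, ρ₀ s * V s := by simp [hf, hd, stateDist]
  rw [← hg0, ← hf0]; ring
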